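/- Let ψ : ℝ → ℝ be 2π-periodic and strictly positive, with θ ↦ √(ψ(θ)) five times continuously differentiable. For n ∈ ℤ define f_n : ℝ² → ℂ by f_n(z) = ∫₀^{2π} e^{−i z·v_θ} e^{i n θ} √(ψ(θ)) dθ. Then there is a constant C > 0 (depending only on ψ) such that for every real R ≥ 1, every integer n with |n| ≥ 10R, and every z ∈ ℝ² with ‖z‖ ≤ R, one has |f_n(z)| ≤ C/|n|³. -/

import Mathlib

open MeasureTheory Set intervalIntegral
open scoped Real

noncomputable def s9c (a b ν θ : ℝ) : ℝ := ν - (b * Real.cos θ - a * Real.sin θ)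
noncomputable def s9c1 (a b θ : ℝ) : ℝ := b * Real.sin θ + a * Real.cos θ
noncomputable def s9c2 (a b θ : ℝ) : ℝ := b * Real.cos θ - a * Real.sin θ

lemma s9_trig_bound (a b R : ℝ) (hab : a^2 + b^2 ≤ R^2) (hR : 0 ≤ R) (θ : ℝ) :
    |s9c1 a b θ| ≤ R ∧ |s9c2 a b θ| ≤ R := by
  have hs := Real.sin_sq_add_cos_sq θ
  unfold s9c1 s9c2
  constructor <;> rw [abs_le] <;> constructor <;>
    nlinarith [sq_nonneg (b*Real.sin θ + a*Real.cos θ + R), sq_nonneg (b*Real.sin θ + a*Real.cos θ - R),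
      sq_nonneg (b*Real.cos θ - a*Real.sin θ + R), sq_nonneg (b*Real.cos θ - a*Real.sin θ - R),
      sq_nonneg (b*Real.sin θ + a*Real.cos θ), sq_nonneg (b*Real.cos θ - a*Real.sin θ)]

lemma s9c_bound (a b ν R : ℝ) (hR1 : 1 ≤ R) (hab : a^2 + b^2 ≤ R^2) (hnR : 10*R ≤ |ν|) (θ : ℝ) :
    9/10*|ν| ≤ |s9c a b ν θ| ∧ |s9c a b ν θ| ≤ 11/10*|ν| := by
  have h2 := (s9_trig_bound a b R hab (by linarith) θ).2
  have h3 : |s9c a b ν θ| ≥ |ν| - |s9c2 a b θ| := by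
    have := abs_sub_abs_le_abs_sub ν (s9c2 a b θ)
    simpa [s9c, s9c2] using this
  have h4 : |s9c a b ν θ| ≤ |ν| + |s9c2 a b θ| := by
    have := abs_sub ν (s9c2 a b θ)
    simpa [s9c, s9c2] using this
  constructor <;> nlinarith

lemma s9c_ne (a b ν R : ℝ) (hR1 : 1 ≤ R) (hab : a^2 + b^2 ≤ R^2) (hnR : 10*R ≤ |ν|) (θ : ℝ) :
    s9c a b ν θ ≠ 0 := by
  have := (s9c_bound a b ν R hR1 hab hnR θ).1
  intro h; rw [h] at this; simp at this; nlinarith [abs_nonneg ν]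

noncomputable def s9w0 (a b ν θ : ℝ) : ℂ := -Complex.I * ((s9c a b ν θ)⁻¹ : ℝ)
noncomputable def s9w1 (a b ν θ : ℝ) : ℂ := -Complex.I * ((-(s9c1 a b θ) / (s9c a b ν θ) ^ 2 : ℝ) : ℂ)
noncomputable def s9w2 (a b ν θ : ℝ) : ℂ :=
  -Complex.I * (((-(s9c2 a b θ) * s9c a b ν θ + 2 * (s9c1 a b θ) ^ 2) / (s9c a b ν θ) ^ 3 : ℝ) : ℂ)
noncomputable def s9w3 (a b ν θ : ℝ) : ℂ :=
  -Complex.I * (((s9c1 a b θ * (s9c a b ν θ) ^ 2 + 6 * s9c1 a b θ * s9c2 a b θ * s9c a b ν θ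
      - 6 * (s9c1 a b θ) ^ 3) / (s9c a b ν θ) ^ 4 : ℝ) : ℂ)

lemma s9_normI (x : ℝ) : ‖-Complex.I * (x : ℂ)‖ = |x| := by
  simp

lemma s9w_bound (a b ν R : ℝ) (hR1 : 1 ≤ R) (hab : a^2 + b^2 ≤ R^2) (hnR : 10*R ≤ |ν|) (θ : ℝ) :
    ‖s9w0 a b ν θ‖ ≤ 2/|ν| ∧ ‖s9w1 a b ν θ‖ ≤ 2/|ν| ∧ ‖s9w2 a b ν θ‖ ≤ 2/|ν|
      ∧ ‖s9w3 a b ν θ‖ ≤ 2/|ν| := by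
  obtain ⟨hc1, hc2⟩ := s9_trig_bound a b R hab (by linarith) θ
  obtain ⟨hlo, hhi⟩ := s9c_bound a b ν R hR1 hab hnR θ
  have hN : 10 ≤ |ν| := by linarith
  have hN0 : 0 < |ν| := by linarith
  have hR0 : (0:ℝ) ≤ R := by linarith
  have hRN : R ≤ |ν|/10 := by linarith
  set c := s9c a b ν θ with hc
  set x1 := s9c1 a b θ with hx1
  set x2 := s9c2 a b θ with hx2
  have hcabs0 : 0 < |c| := by linarith
  have habs2 : |c|^2 = c^2 := sq_abs c
  have hp2 : (9/10*|ν|)^2 ≤ |c|^2 := by nlinarith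
  have hp3 : (9/10*|ν|)^3 ≤ |c|^3 := by
    exact pow_le_pow_left₀ (by positivity) hlo 3
  have hp4 : (9/10*|ν|)^4 ≤ |c|^4 := pow_le_pow_left₀ (by positivity) hlo 4
  have hhi2 : |c|^2 ≤ (11/10*|ν|)^2 := pow_le_pow_left₀ (abs_nonneg c) hhi 2
  refine ⟨?_, ?_, ?_, ?_⟩
  · rw [s9w0, s9_normI, abs_inv]
    simp only [← hc]
    have h2 : |ν|/2 ≤ |c| := by linarith
    calc |c|⁻¹ ≤ (|ν|/2)⁻¹ := inv_anti₀ (by positivity) h2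
      _ = 2/|ν| := by field_simp
  · rw [s9w1, s9_normI, abs_div, abs_neg, abs_pow]
    simp only [← hc, ← hx1]
    rw [div_le_div_iff₀ (by positivity) hN0]
    calc |x1| * |ν| ≤ |ν|/10 * |ν| := mul_le_mul_of_nonneg_right (hc1.trans hRN) (abs_nonneg ν)
      _ ≤ 2*(9/10*|ν|)^2 := by nlinarith [sq_nonneg |ν|]
      _ ≤ 2*|c|^2 := by linarith
  · rw [s9w2, s9_normI, abs_div, abs_pow]
    simp only [← hc, ← hx1, ← hx2]
    rw [div_le_div_iff₀ (by positivity) hN0]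
    have htri : |-x2 * c + 2 * x1 ^ 2| ≤ |x2| * |c| + 2 * |x1| ^ 2 := by
      calc |-x2 * c + 2 * x1 ^ 2| ≤ |-x2 * c| + |2 * x1 ^ 2| := abs_add_le _ _
        _ = |x2| * |c| + 2 * |x1| ^ 2 := by rw [abs_mul, abs_mul, abs_neg, abs_pow]; simp
    have hx1sq : |x1| ^ 2 ≤ R ^ 2 := pow_le_pow_left₀ (abs_nonneg x1) hc1 2
    calc |-x2 * c + 2 * x1 ^ 2| * |ν| ≤ (|x2| * |c| + 2 * |x1| ^ 2) * |ν| :=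
          mul_le_mul_of_nonneg_right htri (abs_nonneg ν)
      _ ≤ (R * (11/10*|ν|) + 2 * R ^ 2) * |ν| := by gcongr
      _ ≤ (|ν|/10 * (11/10*|ν|) + 2 * (|ν|/10) ^ 2) * |ν| := by gcongr
      _ = 13/100 * |ν| ^ 3 := by ring
      _ ≤ 2 * (9/10*|ν|) ^ 3 := by
          have he : (9/10*|ν|) ^ 3 = 729/1000 * |ν| ^ 3 := by ring
          rw [he]; have := pow_nonneg (abs_nonneg ν) 3; linarith
      _ ≤ 2 * |c| ^ 3 := by linarith
  · rw [s9w3, s9_normI, abs_div, abs_pow]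
    simp only [← hc, ← hx1, ← hx2]
    rw [div_le_div_iff₀ (by positivity) hN0]
    have htri : |x1 * c ^ 2 + 6 * x1 * x2 * c - 6 * x1 ^ 3|
        ≤ |x1| * |c| ^ 2 + 6 * |x1| * |x2| * |c| + 6 * |x1| ^ 3 := by
      calc |x1 * c ^ 2 + 6 * x1 * x2 * c - 6 * x1 ^ 3|
          ≤ |x1 * c ^ 2 + 6 * x1 * x2 * c| + |6 * x1 ^ 3| := abs_sub _ _
        _ ≤ |x1 * c ^ 2| + |6 * x1 * x2 * c| + |6 * x1 ^ 3| := by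
            have := abs_add_le (x1 * c ^ 2) (6 * x1 * x2 * c); linarith
        _ = |x1| * |c| ^ 2 + 6 * |x1| * |x2| * |c| + 6 * |x1| ^ 3 := by
            rw [abs_mul, abs_mul, abs_mul, abs_mul, abs_mul, abs_pow, abs_pow]; simp
    calc |x1 * c ^ 2 + 6 * x1 * x2 * c - 6 * x1 ^ 3| * |ν|
        ≤ (|x1| * |c| ^ 2 + 6 * |x1| * |x2| * |c| + 6 * |x1| ^ 3) * |ν| :=
          mul_le_mul_of_nonneg_right htri (abs_nonneg ν)
      _ ≤ (|ν|/10 * (11/10*|ν|) ^ 2 + 6 * (|ν|/10 * (|ν|/10) * (11/10*|ν|)) + 6 * (|ν|/10) ^ 3) * |ν| := by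
          have p1 : |x1| * |c| ^ 2 ≤ |ν|/10 * (11/10*|ν|) ^ 2 :=
            mul_le_mul (hc1.trans hRN) (pow_le_pow_left₀ (abs_nonneg c) hhi 2) (by positivity)
              (by positivity)
          have p2 : |x1| * |x2| * |c| ≤ |ν|/10 * (|ν|/10) * (11/10*|ν|) :=
            mul_le_mul (mul_le_mul (hc1.trans hRN) (hc2.trans hRN) (abs_nonneg x2) (by positivity))
              hhi (abs_nonneg c) (by positivity)
          have p3 : |x1| ^ 3 ≤ (|ν|/10) ^ 3 := pow_le_pow_left₀ (abs_nonneg x1) (hc1.trans hRN) 3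
          exact mul_le_mul_of_nonneg_right (by linarith) (abs_nonneg ν)
      _ = 193/1000 * |ν| ^ 4 := by ring
      _ ≤ 2 * (9/10*|ν|) ^ 4 := by
          have he : (9/10*|ν|) ^ 4 = 6561/10000 * |ν| ^ 4 := by ring
          rw [he]; have := pow_nonneg (abs_nonneg ν) 4; linarith
      _ ≤ 2 * |c| ^ 4 := by linarith

noncomputable section S9
variable {a b ν : ℝ}

lemma s9c_hasDeriv (θ : ℝ) : HasDerivAt (s9c a b ν) (s9c1 a b θ) θ := by
  have h : HasDerivAt (fun θ => ν - (b * Real.cos θ - a * Real.sin θ))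
      (0 - (b * (-Real.sin θ) - a * Real.cos θ)) θ :=
    (hasDerivAt_const θ ν).sub
      (((Real.hasDerivAt_cos θ).const_mul b).sub ((Real.hasDerivAt_sin θ).const_mul a))
  convert h using 1; rfl; simp [s9c1]; ring

lemma s9c1_hasDeriv (θ : ℝ) : HasDerivAt (s9c1 a b) (s9c2 a b θ) θ := by
  have h : HasDerivAt (fun θ => b * Real.sin θ + a * Real.cos θ)
      (b * Real.cos θ + a * (-Real.sin θ)) θ :=
    ((Real.hasDerivAt_sin θ).const_mul b).add ((Real.hasDerivAt_cos θ).const_mul a)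
  convert h using 1; rfl; simp [s9c2]; ring

lemma s9c_cont : Continuous (s9c a b ν) := by
  unfold s9c; fun_prop

lemma s9c1_cont : Continuous (s9c1 a b) := by unfold s9c1; fun_prop

lemma s9c2_cont : Continuous (s9c2 a b) := by unfold s9c2; fun_prop

section nonvanish
variable (hne : ∀ θ, s9c a b ν θ ≠ 0)
include hne

lemma s9w0_hasDeriv (θ : ℝ) : HasDerivAt (s9w0 a b ν) (s9w1 a b ν θ) θ := by
  have h : HasDerivAt (fun θ => (s9c a b ν θ)⁻¹)
      (-(s9c1 a b θ) / (s9c a b ν θ) ^ 2) θ := (s9c_hasDeriv θ).inv (hne θ)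
  exact (h.ofReal_comp).const_mul (-Complex.I)

lemma s9w1_hasDeriv (θ : ℝ) : HasDerivAt (s9w1 a b ν) (s9w2 a b ν θ) θ := by
  have h : HasDerivAt (fun θ => -(s9c1 a b θ) / (s9c a b ν θ) ^ 2)
      ((-(s9c2 a b θ) * (s9c a b ν θ) ^ 2 -
        (-(s9c1 a b θ)) * (2 * s9c a b ν θ ^ (2-1) * s9c1 a b θ)) / ((s9c a b ν θ) ^ 2) ^ 2) θ := by
    exact ((s9c1_hasDeriv θ).neg).div ((s9c_hasDeriv θ).pow 2) (pow_ne_zero 2 (hne θ))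
  have h2 := (h.ofReal_comp).const_mul (-Complex.I)
  convert h2 using 1
  rfl; rfl
  have hc' : ((s9c a b ν θ : ℝ) : ℂ) ≠ 0 := Complex.ofReal_ne_zero.mpr (hne θ)
  simp only [s9w2]
  push_cast
  field_simp
  ring

omit hne in
lemma s9c2_hasDeriv' (θ : ℝ) : HasDerivAt (s9c2 a b) (-(s9c1 a b θ)) θ := by
  have h : HasDerivAt (fun θ => b * Real.cos θ - a * Real.sin θ)
      (b * (-Real.sin θ) - a * Real.cos θ) θ :=
    ((Real.hasDerivAt_cos θ).const_mul b).sub ((Real.hasDerivAt_sin θ).const_mul a)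
  convert h using 1; rfl; simp [s9c1]; ring

lemma s9w2_hasDeriv (θ : ℝ) : HasDerivAt (s9w2 a b ν) (s9w3 a b ν θ) θ := by
  have hnum : HasDerivAt (fun θ => -(s9c2 a b θ) * s9c a b ν θ + 2 * (s9c1 a b θ) ^ 2)
      (s9c1 a b θ * s9c a b ν θ - s9c2 a b θ * s9c1 a b θ + 4 * s9c1 a b θ * s9c2 a b θ) θ := by
    have h := ((s9c2_hasDeriv' (a := a) (b := b) θ).neg.mul (s9c_hasDeriv (a := a) (b := b) (ν := ν) θ)).add
      (((s9c1_hasDeriv (a := a) (b := b) θ).pow 2).const_mul 2)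
    convert h using 1; rfl; rfl; rfl; simp only [Pi.neg_apply]; push_cast; ring
  have h : HasDerivAt (fun θ => (-(s9c2 a b θ) * s9c a b ν θ + 2 * (s9c1 a b θ) ^ 2) / (s9c a b ν θ) ^ 3)
      (((s9c1 a b θ * s9c a b ν θ - s9c2 a b θ * s9c1 a b θ + 4 * s9c1 a b θ * s9c2 a b θ) * (s9c a b ν θ) ^ 3
        - (-(s9c2 a b θ) * s9c a b ν θ + 2 * (s9c1 a b θ) ^ 2) * ((3:ℕ) * s9c a b ν θ ^ (3-1) * s9c1 a b θ))
        / ((s9c a b ν θ) ^ 3) ^ 2) θ :=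
    hnum.div ((s9c_hasDeriv θ).pow 3) (pow_ne_zero 3 (hne θ))
  have h2 := (h.ofReal_comp).const_mul (-Complex.I)
  convert h2 using 1
  rfl; rfl
  have hc' : ((s9c a b ν θ : ℝ) : ℂ) ≠ 0 := Complex.ofReal_ne_zero.mpr (hne θ)
  simp only [s9w3]
  push_cast
  field_simp
  ring

end nonvanish

end S9
noncomputable section S9b
open Complex

variable (a b ν : ℝ) (G0 G1 G2 G3 : ℝ → ℝ)

def s9h1 (θ : ℝ) : ℂ := (G1 θ : ℂ) * s9w0 a b ν θ + (G0 θ : ℂ) * s9w1 a b ν θ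

def s9h1d (θ : ℝ) : ℂ := (G2 θ : ℂ) * s9w0 a b ν θ + 2 * (G1 θ : ℂ) * s9w1 a b ν θ
  + (G0 θ : ℂ) * s9w2 a b ν θ

def s9h2 (θ : ℝ) : ℂ := (G2 θ : ℂ) * (s9w0 a b ν θ)^2 + 3 * (G1 θ : ℂ) * s9w0 a b ν θ * s9w1 a b ν θ
  + (G0 θ : ℂ) * s9w0 a b ν θ * s9w2 a b ν θ + (G0 θ : ℂ) * (s9w1 a b ν θ)^2

def s9h2d (θ : ℝ) : ℂ := (G3 θ : ℂ) * (s9w0 a b ν θ)^2 + 5 * (G2 θ : ℂ) * s9w0 a b ν θ * s9w1 a b ν θ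
  + 4 * (G1 θ : ℂ) * s9w0 a b ν θ * s9w2 a b ν θ + 4 * (G1 θ : ℂ) * (s9w1 a b ν θ)^2
  + 3 * (G0 θ : ℂ) * s9w1 a b ν θ * s9w2 a b ν θ + (G0 θ : ℂ) * s9w0 a b ν θ * s9w3 a b ν θ

def s9h3 (θ : ℝ) : ℂ := s9h2d a b ν G0 G1 G2 G3 θ * s9w0 a b ν θ + s9h2 a b ν G0 G1 G2 θ * s9w1 a b ν θ

variable {a b ν G0 G1 G2 G3}
variable (hne : ∀ θ, s9c a b ν θ ≠ 0)
  (hd0 : ∀ θ, HasDerivAt G0 (G1 θ) θ) (hd1 : ∀ θ, HasDerivAt G1 (G2 θ) θ)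
  (hd2 : ∀ θ, HasDerivAt G2 (G3 θ) θ)

section withDeriv
include hne hd0 hd1

omit hd1 in
lemma s9F1_hasDeriv (θ : ℝ) :
    HasDerivAt (fun t => (G0 t : ℂ) * s9w0 a b ν t) (s9h1 a b ν G0 G1 θ) θ :=
  ((hd0 θ).ofReal_comp.mul (s9w0_hasDeriv hne θ))

lemma s9h1_hasDeriv (θ : ℝ) :
    HasDerivAt (s9h1 a b ν G0 G1) (s9h1d a b ν G0 G1 G2 θ) θ := by
  have h := ((hd1 θ).ofReal_comp.mul (s9w0_hasDeriv hne θ)).add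
    ((hd0 θ).ofReal_comp.mul (s9w1_hasDeriv hne θ))
  convert h using 1
  rfl; rfl
  simp only [s9h1d]; ring

lemma s9F2_hasDeriv (θ : ℝ) :
    HasDerivAt (fun t => s9h1 a b ν G0 G1 t * s9w0 a b ν t) (s9h2 a b ν G0 G1 G2 θ) θ := by
  have h := (s9h1_hasDeriv hne hd0 hd1 θ).mul (s9w0_hasDeriv hne θ)
  convert h using 1
  rfl; rfl
  simp only [s9h2, s9h1, s9h1d]; ring

include hd2 in
lemma s9h2_hasDeriv (θ : ℝ) :
    HasDerivAt (s9h2 a b ν G0 G1 G2) (s9h2d a b ν G0 G1 G2 G3 θ) θ := by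
  have hw0 := s9w0_hasDeriv hne (a := a) (b := b) (ν := ν)
  have hw1 := s9w1_hasDeriv hne (a := a) (b := b) (ν := ν)
  have hw2 := s9w2_hasDeriv hne (a := a) (b := b) (ν := ν)
  have h := ((((hd2 θ).ofReal_comp.mul ((hw0 θ).mul (hw0 θ))).add
      ((((hd1 θ).ofReal_comp.const_mul (3:ℂ)).mul (hw0 θ)).mul (hw1 θ))).add
      ((((hd0 θ).ofReal_comp.mul (hw0 θ)).mul (hw2 θ)))).add
      ((hd0 θ).ofReal_comp.mul ((hw1 θ).mul (hw1 θ)))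
  convert h using 1
  · rfl
  · funext t; simp only [s9h2, Pi.mul_apply, Pi.add_apply]; ring
  · simp only [s9h2d, Pi.mul_apply]; push_cast; ring

include hd2 in
lemma s9F3_hasDeriv (θ : ℝ) :
    HasDerivAt (fun t => s9h2 a b ν G0 G1 G2 t * s9w0 a b ν t)
      (s9h3 a b ν G0 G1 G2 G3 θ) θ := by
  exact (s9h2_hasDeriv hne hd0 hd1 hd2 θ).mul (s9w0_hasDeriv hne θ)

end withDeriv
end S9b
noncomputable section S9c
open Complex

variable {a b ν R M : ℝ} {G0 G1 G2 G3 : ℝ → ℝ}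

lemma s9w_cont (hne : ∀ θ, s9c a b ν θ ≠ 0) :
    Continuous (s9w0 a b ν) ∧ Continuous (s9w1 a b ν) ∧ Continuous (s9w2 a b ν)
      ∧ Continuous (s9w3 a b ν) := by
  have hc := s9c_cont (a := a) (b := b) (ν := ν)
  have hc1 := s9c1_cont (a := a) (b := b)
  have hc2 := s9c2_cont (a := a) (b := b)
  have hinv : Continuous (fun θ => (s9c a b ν θ)⁻¹) := hc.inv₀ hne
  refine ⟨?_, ?_, ?_, ?_⟩
  · exact continuous_const.mul (Complex.continuous_ofReal.comp hinv)
  · apply continuous_const.mul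
    apply Complex.continuous_ofReal.comp
    have : (fun θ => -(s9c1 a b θ) / (s9c a b ν θ) ^ 2)
        = fun θ => -(s9c1 a b θ) * ((s9c a b ν θ)⁻¹) ^ 2 := by
      funext θ; rw [div_eq_mul_inv, inv_pow]
    rw [this]; exact (hc1.neg).mul (hinv.pow 2)
  · apply continuous_const.mul
    apply Complex.continuous_ofReal.comp
    have : (fun θ => (-(s9c2 a b θ) * s9c a b ν θ + 2 * (s9c1 a b θ) ^ 2) / (s9c a b ν θ) ^ 3)
        = fun θ => (-(s9c2 a b θ) * s9c a b ν θ + 2 * (s9c1 a b θ) ^ 2) * ((s9c a b ν θ)⁻¹) ^ 3 := by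
      funext θ; rw [div_eq_mul_inv, inv_pow]
    rw [this]; exact ((hc2.neg.mul hc).add (continuous_const.mul (hc1.pow 2))).mul (hinv.pow 3)
  · apply continuous_const.mul
    apply Complex.continuous_ofReal.comp
    have : (fun θ => (s9c1 a b θ * (s9c a b ν θ) ^ 2 + 6 * s9c1 a b θ * s9c2 a b θ * s9c a b ν θ
          - 6 * (s9c1 a b θ) ^ 3) / (s9c a b ν θ) ^ 4)
        = fun θ => (s9c1 a b θ * (s9c a b ν θ) ^ 2 + 6 * s9c1 a b θ * s9c2 a b θ * s9c a b ν θ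
          - 6 * (s9c1 a b θ) ^ 3) * ((s9c a b ν θ)⁻¹) ^ 4 := by
      funext θ; rw [div_eq_mul_inv, inv_pow]
    rw [this]
    exact (((hc1.mul (hc.pow 2)).add (((continuous_const.mul hc1).mul hc2).mul hc)).sub
      (continuous_const.mul (hc1.pow 3))).mul (hinv.pow 4)

lemma s9_period (f : ℝ → ℝ → ℂ)
    (hf : ∀ ν' c1' c2' : ℝ, True) : True := trivial

/-- values of the `c` functions at `0` and `2π` agree -/
lemma s9c_endpoints :
    s9c a b ν (2*π) = s9c a b ν 0 ∧ s9c1 a b (2*π) = s9c1 a b 0 ∧ s9c2 a b (2*π) = s9c2 a b 0 := by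
  refine ⟨?_, ?_, ?_⟩ <;> simp [s9c, s9c1, s9c2, Real.cos_two_pi, Real.sin_two_pi]

lemma s9w_endpoints :
    s9w0 a b ν (2*π) = s9w0 a b ν 0 ∧ s9w1 a b ν (2*π) = s9w1 a b ν 0
      ∧ s9w2 a b ν (2*π) = s9w2 a b ν 0 ∧ s9w3 a b ν (2*π) = s9w3 a b ν 0 := by
  obtain ⟨e0, e1, e2⟩ := s9c_endpoints (a := a) (b := b) (ν := ν)
  refine ⟨?_, ?_, ?_, ?_⟩ <;> simp only [s9w0, s9w1, s9w2, s9w3, e0, e1, e2]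

lemma s9_norm_add4 (x1 x2 x3 x4 : ℂ) : ‖x1+x2+x3+x4‖ ≤ ‖x1‖+‖x2‖+‖x3‖+‖x4‖ := by
  have a1 := norm_add_le (x1+x2+x3) x4
  have a2 := norm_add_le (x1+x2) x3
  have a3 := norm_add_le x1 x2
  linarith

lemma s9_norm_add6 (x1 x2 x3 x4 x5 x6 : ℂ) :
    ‖x1+x2+x3+x4+x5+x6‖ ≤ ‖x1‖+‖x2‖+‖x3‖+‖x4‖+‖x5‖+‖x6‖ := by
  have a1 := norm_add_le (x1+x2+x3+x4+x5) x6
  have a2 := norm_add_le (x1+x2+x3+x4) x5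
  have a3 := s9_norm_add4 x1 x2 x3 x4
  linarith

set_option maxHeartbeats 1000000 in
/-- norm bound for `s9h3` -/
lemma s9h3_bound (hR1 : 1 ≤ R) (hab : a^2 + b^2 ≤ R^2) (hnR : 10*R ≤ |ν|)
    (hM1 : 1 ≤ M) (hb0 : ∀ θ, |G0 θ| ≤ M) (hb1 : ∀ θ, |G1 θ| ≤ M)
    (hb2 : ∀ θ, |G2 θ| ≤ M) (hb3 : ∀ θ, |G3 θ| ≤ M) (θ : ℝ) :
    ‖s9h3 a b ν G0 G1 G2 G3 θ‖ ≤ 192 * M / |ν|^3 := by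
  obtain ⟨w0b, w1b, w2b, w3b⟩ := s9w_bound a b ν R hR1 hab hnR θ
  have hN : (10:ℝ) ≤ |ν| := by linarith
  have hN0 : (0:ℝ) < |ν| := by linarith
  set W : ℝ := 2/|ν| with hW
  have hW0 : 0 ≤ W := by positivity
  have hM0 : (0:ℝ) ≤ M := by linarith
  have hg0 : ‖((G0 θ : ℝ) : ℂ)‖ ≤ M := by rw [Complex.norm_real]; exact hb0 θ
  have hg1 : ‖((G1 θ : ℝ) : ℂ)‖ ≤ M := by rw [Complex.norm_real]; exact hb1 θ
  have hg2 : ‖((G2 θ : ℝ) : ℂ)‖ ≤ M := by rw [Complex.norm_real]; exact hb2 θ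
  have hg3 : ‖((G3 θ : ℝ) : ℂ)‖ ≤ M := by rw [Complex.norm_real]; exact hb3 θ
  have h2b : ‖s9h2 a b ν G0 G1 G2 θ‖ ≤ 6 * M * W^2 := by
    rw [s9h2]
    have t1 : ‖(G2 θ : ℂ) * (s9w0 a b ν θ)^2‖ ≤ M * W^2 := by
      rw [norm_mul, norm_pow]
      exact mul_le_mul hg2 (pow_le_pow_left₀ (norm_nonneg _) w0b 2) (by positivity) hM0
    have t2 : ‖3 * (G1 θ : ℂ) * s9w0 a b ν θ * s9w1 a b ν θ‖ ≤ 3 * M * W * W := by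
      rw [norm_mul, norm_mul, norm_mul]
      have : ‖(3:ℂ)‖ = 3 := by norm_num
      rw [this]
      gcongr <;> simp [hg1]
    have t3 : ‖(G0 θ : ℂ) * s9w0 a b ν θ * s9w2 a b ν θ‖ ≤ M * W * W := by
      rw [norm_mul, norm_mul]; gcongr
    have t4 : ‖(G0 θ : ℂ) * (s9w1 a b ν θ)^2‖ ≤ M * W^2 := by
      rw [norm_mul, norm_pow]
      exact mul_le_mul hg0 (pow_le_pow_left₀ (norm_nonneg _) w1b 2) (by positivity) hM0
    calc ‖_ + _ + _ + _‖ ≤ ‖_‖ + ‖_‖ + ‖_‖ + ‖_‖ := s9_norm_add4 _ _ _ _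
      _ ≤ 6 * M * W^2 := by nlinarith [t1, t2, t3, t4, sq_nonneg W]
  have h2db : ‖s9h2d a b ν G0 G1 G2 G3 θ‖ ≤ 18 * M * W^2 := by
    rw [s9h2d]
    have t1 : ‖(G3 θ : ℂ) * (s9w0 a b ν θ)^2‖ ≤ M * W^2 := by
      rw [norm_mul, norm_pow]
      exact mul_le_mul hg3 (pow_le_pow_left₀ (norm_nonneg _) w0b 2) (by positivity) hM0
    have t2 : ‖5 * (G2 θ : ℂ) * s9w0 a b ν θ * s9w1 a b ν θ‖ ≤ 5 * M * W * W := by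
      rw [norm_mul, norm_mul, norm_mul]
      have : ‖(5:ℂ)‖ = 5 := by norm_num
      rw [this]; gcongr <;> simp [hg2]
    have t3 : ‖4 * (G1 θ : ℂ) * s9w0 a b ν θ * s9w2 a b ν θ‖ ≤ 4 * M * W * W := by
      rw [norm_mul, norm_mul, norm_mul]
      have : ‖(4:ℂ)‖ = 4 := by norm_num
      rw [this]; gcongr <;> simp [hg1]
    have t4 : ‖4 * (G1 θ : ℂ) * (s9w1 a b ν θ)^2‖ ≤ 4 * M * W^2 := by
      rw [norm_mul, norm_mul, norm_pow]
      have : ‖(4:ℂ)‖ = 4 := by norm_num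
      rw [this]
      have := pow_le_pow_left₀ (norm_nonneg (s9w1 a b ν θ)) w1b 2
      have h4 : ‖((G1 θ : ℝ) : ℂ)‖ * ‖s9w1 a b ν θ‖^2 ≤ M * W^2 :=
        mul_le_mul hg1 this (by positivity) hM0
      nlinarith [norm_nonneg ((G1 θ : ℝ) : ℂ), norm_nonneg (s9w1 a b ν θ)]
    have t5 : ‖3 * (G0 θ : ℂ) * s9w1 a b ν θ * s9w2 a b ν θ‖ ≤ 3 * M * W * W := by
      rw [norm_mul, norm_mul, norm_mul]
      have : ‖(3:ℂ)‖ = 3 := by norm_num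
      rw [this]; gcongr <;> simp [hg0]
    have t6 : ‖(G0 θ : ℂ) * s9w0 a b ν θ * s9w3 a b ν θ‖ ≤ M * W * W := by
      rw [norm_mul, norm_mul]; gcongr
    calc ‖_ + _ + _ + _ + _ + _‖ ≤ ‖_‖ + ‖_‖ + ‖_‖ + ‖_‖ + ‖_‖ + ‖_‖ := s9_norm_add6 _ _ _ _ _ _
      _ ≤ 18 * M * W^2 := by nlinarith [t1, t2, t3, t4, t5, t6, sq_nonneg W]
  have h3b : ‖s9h3 a b ν G0 G1 G2 G3 θ‖ ≤ 24 * M * W^3 := by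
    rw [s9h3]
    calc ‖_ + _‖ ≤ ‖s9h2d a b ν G0 G1 G2 G3 θ * s9w0 a b ν θ‖
          + ‖s9h2 a b ν G0 G1 G2 θ * s9w1 a b ν θ‖ := norm_add_le _ _
      _ ≤ 18 * M * W^2 * W + 6 * M * W^2 * W := by
          rw [norm_mul, norm_mul]
          gcongr <;> positivity
      _ = 24 * M * W^3 := by ring
  calc ‖s9h3 a b ν G0 G1 G2 G3 θ‖ ≤ 24 * M * W^3 := h3b
    _ = 192 * M / |ν|^3 := by rw [hW]; field_simp; ring

end S9c
noncomputable section S9d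
open Complex

set_option maxHeartbeats 1000000 in
/-- main auxiliary estimate -/
lemma s9_main (n : ℤ) (a b R M : ℝ) (G0 G1 G2 G3 : ℝ → ℝ)
    (hd0 : ∀ θ, HasDerivAt G0 (G1 θ) θ) (hd1 : ∀ θ, HasDerivAt G1 (G2 θ) θ)
    (hd2 : ∀ θ, HasDerivAt G2 (G3 θ) θ) (hcont3 : Continuous G3)
    (hp0 : Function.Periodic G0 (2*π)) (hp1 : Function.Periodic G1 (2*π))
    (hp2 : Function.Periodic G2 (2*π))
    (hM1 : 1 ≤ M) (hb0 : ∀ θ, |G0 θ| ≤ M) (hb1 : ∀ θ, |G1 θ| ≤ M)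
    (hb2 : ∀ θ, |G2 θ| ≤ M) (hb3 : ∀ θ, |G3 θ| ≤ M)
    (hR1 : 1 ≤ R) (hab : a^2 + b^2 ≤ R^2) (hnR : 10*R ≤ |(n:ℝ)|) :
    ‖∫ θ in (0:ℝ)..(2*π), Complex.exp (Complex.I *
        ((((n:ℝ))*θ - (a*Real.cos θ + b*Real.sin θ) : ℝ) : ℂ)) * ((G0 θ : ℝ) : ℂ)‖
      ≤ 2000 * M / |(n:ℝ)|^3 := by
  set ν : ℝ := (n:ℝ) with hν
  have hne : ∀ θ, s9c a b ν θ ≠ 0 := s9c_ne a b ν R hR1 hab hnR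
  set E : ℝ → ℂ := fun θ => Complex.exp (Complex.I *
    ((ν*θ - (a*Real.cos θ + b*Real.sin θ) : ℝ) : ℂ)) with hE_def
  -- derivative of E
  have hE : ∀ θ, HasDerivAt E (E θ * (Complex.I * ((s9c a b ν θ : ℝ) : ℂ))) θ := by
    intro θ
    have hr : HasDerivAt (fun θ => ν*θ - (a*Real.cos θ + b*Real.sin θ)) (s9c a b ν θ) θ := by
      have h := ((hasDerivAt_id θ).const_mul ν).sub
        (((Real.hasDerivAt_cos θ).const_mul a).add ((Real.hasDerivAt_sin θ).const_mul b))
      convert h using 1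
      rfl; rfl; rfl
      simp only [s9c]; ring
    exact (hr.ofReal_comp.const_mul Complex.I).cexp
  have hcE : Continuous E := by
    apply Complex.continuous_exp.comp
    apply continuous_const.mul
    apply Complex.continuous_ofReal.comp
    fun_prop
  have hEnorm : ∀ θ, ‖E θ‖ = 1 := by
    intro θ
    rw [hE_def]; dsimp only; rw [mul_comm]; exact Complex.norm_exp_ofReal_mul_I _
  have hEper : E (2*π) = E 0 := by
    have h1 : ((ν*(2*π) - (a*Real.cos (2*π) + b*Real.sin (2*π)) : ℝ) : ℂ)
        = ((ν*(2*π) - a : ℝ) : ℂ) := by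
      rw [Real.cos_two_pi, Real.sin_two_pi]; norm_num
    have h0 : ((ν*0 - (a*Real.cos 0 + b*Real.sin 0) : ℝ) : ℂ) = ((-a : ℝ) : ℂ) := by
      rw [Real.cos_zero, Real.sin_zero]; norm_num
    simp only [hE_def]
    rw [h1, h0]
    have : Complex.I * ((ν*(2*π) - a : ℝ) : ℂ) = (n:ℂ) * (2*π*Complex.I) + Complex.I * ((-a : ℝ) : ℂ) := by
      push_cast [hν]; ring
    rw [this, Complex.exp_add, Complex.exp_int_mul_two_pi_mul_I, one_mul]
  -- continuity facts
  obtain ⟨w0c, w1c, w2c, w3c⟩ := s9w_cont (a := a) (b := b) (ν := ν) hne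
  have hG0c : Continuous G0 := continuous_iff_continuousAt.2 fun θ => (hd0 θ).continuousAt
  have hG1c : Continuous G1 := continuous_iff_continuousAt.2 fun θ => (hd1 θ).continuousAt
  have hG2c : Continuous G2 := continuous_iff_continuousAt.2 fun θ => (hd2 θ).continuousAt
  have hgc0 : Continuous (fun θ => ((G0 θ : ℝ) : ℂ)) := Complex.continuous_ofReal.comp hG0c
  have hgc1 : Continuous (fun θ => ((G1 θ : ℝ) : ℂ)) := Complex.continuous_ofReal.comp hG1c
  have hgc2 : Continuous (fun θ => ((G2 θ : ℝ) : ℂ)) := Complex.continuous_ofReal.comp hG2c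
  have hgc3 : Continuous (fun θ => ((G3 θ : ℝ) : ℂ)) := Complex.continuous_ofReal.comp hcont3
  have hh1c : Continuous (s9h1 a b ν G0 G1) := by
    unfold s9h1; exact (hgc1.mul w0c).add (hgc0.mul w1c)
  have hh1dc : Continuous (s9h1d a b ν G0 G1 G2) := by
    unfold s9h1d
    exact (((hgc2.mul w0c).add (((continuous_const.mul hgc1)).mul w1c)).add (hgc0.mul w2c))
  have hh2c : Continuous (s9h2 a b ν G0 G1 G2) := by
    unfold s9h2
    exact (((hgc2.mul (w0c.pow 2)).add (((continuous_const.mul hgc1).mul w0c).mul w1c)).add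
      ((hgc0.mul w0c).mul w2c)).add (hgc0.mul (w1c.pow 2))
  have hh2dc : Continuous (s9h2d a b ν G0 G1 G2 G3) := by
    unfold s9h2d
    exact (((((hgc3.mul (w0c.pow 2)).add (((continuous_const.mul hgc2).mul w0c).mul w1c)).add
      (((continuous_const.mul hgc1).mul w0c).mul w2c)).add
      ((continuous_const.mul hgc1).mul (w1c.pow 2))).add
      (((continuous_const.mul hgc0).mul w1c).mul w2c)).add ((hgc0.mul w0c).mul w3c)
  have hh3c : Continuous (s9h3 a b ν G0 G1 G2 G3) := by
    unfold s9h3; exact (hh2dc.mul w0c).add (hh2c.mul w1c)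
  -- endpoint equalities
  obtain ⟨we0, we1, we2, we3⟩ := s9w_endpoints (a := a) (b := b) (ν := ν)
  have hg0e : G0 (2*π) = G0 0 := by simpa using hp0 0
  have hg1e : G1 (2*π) = G1 0 := by simpa using hp1 0
  have hg2e : G2 (2*π) = G2 0 := by simpa using hp2 0
  -- the integration-by-parts principle
  have ibp : ∀ (F F' : ℝ → ℂ), (∀ θ, HasDerivAt F (F' θ) θ) → Continuous F' →
      F (2*π) = F 0 →
      (∫ θ in (0:ℝ)..(2*π), (E θ * (Complex.I * ((s9c a b ν θ : ℝ) : ℂ))) * F θ)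
        = - ∫ θ in (0:ℝ)..(2*π), E θ * F' θ := by
    intro F F' hF hF'c hFper
    have hcF : Continuous F := continuous_iff_continuousAt.2 fun θ => (hF θ).continuousAt
    have hcEd : Continuous (fun θ => E θ * (Complex.I * ((s9c a b ν θ : ℝ) : ℂ))) :=
      hcE.mul (continuous_const.mul (Complex.continuous_ofReal.comp (s9c_cont)))
    have key := intervalIntegral.integral_deriv_mul_eq_sub (a := (0:ℝ)) (b := 2*π)
      (u := E) (v := F) (u' := fun θ => E θ * (Complex.I * ((s9c a b ν θ : ℝ) : ℂ))) (v' := F')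
      (fun x _ => hE x) (fun x _ => hF x)
      ((hcEd).intervalIntegrable _ _) ((hF'c).intervalIntegrable _ _)
    have hz : E (2*π) * F (2*π) - E 0 * F 0 = 0 := by rw [hEper, hFper]; ring
    rw [hz] at key
    have hsplit := intervalIntegral.integral_add
      ((hcEd.mul hcF).intervalIntegrable (μ := MeasureTheory.volume) (0:ℝ) (2*π))
      ((hcE.mul hF'c).intervalIntegrable (μ := MeasureTheory.volume) (0:ℝ) (2*π))
    rw [intervalIntegral.integral_add (f := fun x => E x * (Complex.I * ((s9c a b ν x : ℝ) : ℂ)) * F x) (g := fun x => E x * F' x) ((hcEd.mul hcF).intervalIntegrable _ _) ((hcE.mul hF'c).intervalIntegrable _ _)] at key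
    linear_combination key
  -- rewrite trick : (I c) * w0 = 1
  have hw0inv : ∀ θ, (Complex.I * ((s9c a b ν θ : ℝ) : ℂ)) * s9w0 a b ν θ = 1 := by
    intro θ
    have hcne : ((s9c a b ν θ : ℝ) : ℂ) ≠ 0 := Complex.ofReal_ne_zero.mpr (hne θ)
    rw [s9w0, Complex.ofReal_inv]
    field_simp
    linear_combination (-1 : ℂ) * Complex.I_mul_I
  -- step 1
  have step1 : (∫ θ in (0:ℝ)..(2*π), E θ * ((G0 θ : ℝ) : ℂ))
      = - ∫ θ in (0:ℝ)..(2*π), E θ * s9h1 a b ν G0 G1 θ := by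
    have hcongr : ∀ θ, E θ * ((G0 θ : ℝ) : ℂ)
        = (E θ * (Complex.I * ((s9c a b ν θ : ℝ) : ℂ))) * ((G0 θ : ℂ) * s9w0 a b ν θ) := by
      intro θ
      have := hw0inv θ
      calc E θ * ((G0 θ : ℝ) : ℂ) = E θ * ((G0 θ : ℝ) : ℂ) * 1 := by ring
        _ = _ := by rw [← this]; ring
    rw [intervalIntegral.integral_congr (g := fun θ =>
      (E θ * (Complex.I * ((s9c a b ν θ : ℝ) : ℂ))) * ((G0 θ : ℂ) * s9w0 a b ν θ))
      (fun θ _ => hcongr θ)]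
    exact ibp _ _ (s9F1_hasDeriv hne hd0) hh1c (by rw [hg0e, we0])
  -- step 2
  have step2 : (∫ θ in (0:ℝ)..(2*π), E θ * s9h1 a b ν G0 G1 θ)
      = - ∫ θ in (0:ℝ)..(2*π), E θ * s9h2 a b ν G0 G1 G2 θ := by
    have hcongr : ∀ θ, E θ * s9h1 a b ν G0 G1 θ
        = (E θ * (Complex.I * ((s9c a b ν θ : ℝ) : ℂ))) * (s9h1 a b ν G0 G1 θ * s9w0 a b ν θ) := by
      intro θ
      have := hw0inv θ
      calc E θ * s9h1 a b ν G0 G1 θ = E θ * s9h1 a b ν G0 G1 θ * 1 := by ring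
        _ = _ := by rw [← this]; ring
    rw [intervalIntegral.integral_congr (g := fun θ =>
      (E θ * (Complex.I * ((s9c a b ν θ : ℝ) : ℂ))) * (s9h1 a b ν G0 G1 θ * s9w0 a b ν θ))
      (fun θ _ => hcongr θ)]
    refine ibp _ _ (s9F2_hasDeriv hne hd0 hd1) hh2c ?_
    simp only [s9h1, hg0e, hg1e, we0, we1]
  -- step 3
  have step3 : (∫ θ in (0:ℝ)..(2*π), E θ * s9h2 a b ν G0 G1 G2 θ)
      = - ∫ θ in (0:ℝ)..(2*π), E θ * s9h3 a b ν G0 G1 G2 G3 θ := by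
    have hcongr : ∀ θ, E θ * s9h2 a b ν G0 G1 G2 θ
        = (E θ * (Complex.I * ((s9c a b ν θ : ℝ) : ℂ))) * (s9h2 a b ν G0 G1 G2 θ * s9w0 a b ν θ) := by
      intro θ
      have := hw0inv θ
      calc E θ * s9h2 a b ν G0 G1 G2 θ = E θ * s9h2 a b ν G0 G1 G2 θ * 1 := by ring
        _ = _ := by rw [← this]; ring
    rw [intervalIntegral.integral_congr (g := fun θ =>
      (E θ * (Complex.I * ((s9c a b ν θ : ℝ) : ℂ))) * (s9h2 a b ν G0 G1 G2 θ * s9w0 a b ν θ))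
      (fun θ _ => hcongr θ)]
    refine ibp _ _ (s9F3_hasDeriv hne hd0 hd1 hd2) hh3c ?_
    simp only [s9h2, hg0e, hg1e, hg2e, we0, we1, we2]
  -- final bound
  have hNpos : (0:ℝ) < |ν| := by
    have : (10:ℝ) ≤ |ν| := by linarith
    linarith
  have hfinal : ‖∫ θ in (0:ℝ)..(2*π), E θ * s9h3 a b ν G0 G1 G2 G3 θ‖
      ≤ 192 * M / |ν|^3 * |2*π - 0| := by
    apply intervalIntegral.norm_integral_le_of_norm_le_const
    intro x _
    rw [norm_mul, hEnorm x, one_mul]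
    exact s9h3_bound hR1 hab hnR hM1 hb0 hb1 hb2 hb3 x
  rw [step1, step2, step3, norm_neg, norm_neg, norm_neg]
  calc ‖∫ θ in (0:ℝ)..(2*π), E θ * s9h3 a b ν G0 G1 G2 G3 θ‖
      ≤ 192 * M / |ν|^3 * |2*π - 0| := hfinal
    _ ≤ 192 * M / |ν|^3 * 7 := by
        have hπ : π ≤ 4 := Real.pi_le_four
        have hπ0 : 0 < π := Real.pi_pos
        have : |2*π - 0| = 2*π := by rw [abs_of_pos]; ring; linarith
        rw [this]
        have h7 : 2*π ≤ 7 := by nlinarith [Real.pi_lt_d2]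
        have hpos : 0 ≤ 192 * M / |ν|^3 := by positivity
        nlinarith
    _ ≤ 2000 * M / |ν|^3 := by
        rw [div_mul_eq_mul_div, div_le_div_iff₀ (by positivity) (by positivity)]
        have hpos : 0 < |ν|^3 := by positivity
        nlinarith [hpos, hM1]

end S9d
section S9final

lemma s9_periodic_deriv (f : ℝ → ℝ) (c : ℝ) (h : Function.Periodic f c) :
    Function.Periodic (deriv f) c := by
  intro x
  have h1 : deriv (fun y => f (y + c)) x = deriv f (x + c) := deriv_comp_add_const f c x
  rw [← h1]; congr 1; funext y; exact h y

lemma s9_bdd (f : ℝ → ℝ) (hf : Continuous f) (hp : Function.Periodic f (2*π)) :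
    ∃ M, ∀ x, |f x| ≤ M := by
  obtain ⟨M, hM⟩ := (isCompact_Icc (a := (0:ℝ)) (b := 2*π)).exists_bound_of_continuousOn
    hf.continuousOn
  refine ⟨M, fun x => ?_⟩
  obtain ⟨y, hy, hxy⟩ := hp.exists_mem_Ico₀ (by positivity) x
  rw [hxy]
  have := hM y (Set.mem_Icc_of_Ico hy)
  simpa [Real.norm_eq_abs] using this

/-- decay of the coefficient functions `f_n`: if `ψ` is `2π`-periodic,
positive, and `√ψ` is `C⁵`, then there is `C > 0` (depending only on `ψ`) such that for
every `R ≥ 1`, every integer `n` with `|n| ≥ 10R` and every `z` with `‖z‖ ≤ R`,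
`|f_n(z)| ≤ C/|n|³`, where `f_n(z) = ∫₀^{2π} e^{-i z·v_θ} e^{i n θ} √(ψ(θ)) dθ`. -/
theorem stmt9 (ψ : ℝ → ℝ) (hper : Function.Periodic ψ (2 * π)) (hpos : ∀ θ, 0 < ψ θ)
    (hC5 : ContDiff ℝ 5 (fun θ => Real.sqrt (ψ θ))) :
    ∃ C > (0 : ℝ), ∀ R : ℝ, 1 ≤ R → ∀ n : ℤ, 10 * R ≤ |(n : ℝ)| →
      ∀ z : ℝ × ℝ, z.1 ^ 2 + z.2 ^ 2 ≤ R ^ 2 →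
        ‖(∫ θ in (0 : ℝ)..(2 * π),
            Complex.exp (-(Complex.I * ((z.1 * Real.cos θ + z.2 * Real.sin θ : ℝ) : ℂ)))
              * Complex.exp (Complex.I * (n : ℂ) * (θ : ℂ))
              * (Real.sqrt (ψ θ) : ℂ))‖
          ≤ C / |(n : ℝ)| ^ 3 := by
  set G0 : ℝ → ℝ := fun θ => Real.sqrt (ψ θ) with hG0
  set G1 : ℝ → ℝ := deriv G0 with hG1
  set G2 : ℝ → ℝ := deriv G1 with hG2
  set G3 : ℝ → ℝ := deriv G2 with hG3
  -- smoothness chain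
  have h5 : ContDiff ℝ ((4 : WithTop ℕ∞) + 1) G0 := by
    rw [show ((4 : WithTop ℕ∞) + 1) = 5 by norm_num]; exact hC5
  have s5 := contDiff_succ_iff_deriv.mp h5
  have hdiff0 : Differentiable ℝ G0 := s5.1
  have h4 : ContDiff ℝ ((3 : WithTop ℕ∞) + 1) G1 := by
    rw [show ((3 : WithTop ℕ∞) + 1) = 4 by norm_num]; exact s5.2.2
  have s4 := contDiff_succ_iff_deriv.mp h4
  have hdiff1 : Differentiable ℝ G1 := s4.1
  have h3 : ContDiff ℝ ((2 : WithTop ℕ∞) + 1) G2 := by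
    rw [show ((2 : WithTop ℕ∞) + 1) = 3 by norm_num]; exact s4.2.2
  have s3 := contDiff_succ_iff_deriv.mp h3
  have hdiff2 : Differentiable ℝ G2 := s3.1
  have h2 : ContDiff ℝ (2 : WithTop ℕ∞) G3 := s3.2.2
  have hcont3 : Continuous G3 := h2.continuous
  have hd0 : ∀ θ, HasDerivAt G0 (G1 θ) θ := fun θ => (hdiff0 θ).hasDerivAt
  have hd1 : ∀ θ, HasDerivAt G1 (G2 θ) θ := fun θ => (hdiff1 θ).hasDerivAt
  have hd2 : ∀ θ, HasDerivAt G2 (G3 θ) θ := fun θ => (hdiff2 θ).hasDerivAt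
  -- periodicity
  have hp0 : Function.Periodic G0 (2*π) := fun x => congrArg Real.sqrt (hper x)
  have hp1 : Function.Periodic G1 (2*π) := s9_periodic_deriv G0 (2*π) hp0
  have hp2 : Function.Periodic G2 (2*π) := s9_periodic_deriv G1 (2*π) hp1
  have hp3 : Function.Periodic G3 (2*π) := s9_periodic_deriv G2 (2*π) hp2
  -- bounds
  obtain ⟨M0, hM0⟩ := s9_bdd G0 hdiff0.continuous hp0
  obtain ⟨M1, hM1⟩ := s9_bdd G1 hdiff1.continuous hp1
  obtain ⟨M2, hM2⟩ := s9_bdd G2 hdiff2.continuous hp2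
  obtain ⟨M3, hM3⟩ := s9_bdd G3 hcont3 hp3
  set M : ℝ := max 1 (max (max M0 M1) (max M2 M3)) with hM
  have hM1' : 1 ≤ M := le_max_left _ _
  have hb0 : ∀ θ, |G0 θ| ≤ M := fun θ => le_trans (hM0 θ)
    (le_trans (le_trans (le_max_left _ _) (le_max_left _ _)) (le_max_right _ _))
  have hb1 : ∀ θ, |G1 θ| ≤ M := fun θ => le_trans (hM1 θ)
    (le_trans (le_trans (le_max_right _ _) (le_max_left _ _)) (le_max_right _ _))
  have hb2 : ∀ θ, |G2 θ| ≤ M := fun θ => le_trans (hM2 θ)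
    (le_trans (le_trans (le_max_left _ _) (le_max_right _ _)) (le_max_right _ _))
  have hb3 : ∀ θ, |G3 θ| ≤ M := fun θ => le_trans (hM3 θ)
    (le_trans (le_trans (le_max_right _ _) (le_max_right _ _)) (le_max_right _ _))
  refine ⟨2000 * M, by linarith, ?_⟩
  intro R hR n hn z hz
  have hcongr : ∀ θ : ℝ,
      Complex.exp (-(Complex.I * ((z.1 * Real.cos θ + z.2 * Real.sin θ : ℝ) : ℂ)))
        * Complex.exp (Complex.I * (n : ℂ) * (θ : ℂ)) * (Real.sqrt (ψ θ) : ℂ)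
      = Complex.exp (Complex.I *
          ((((n:ℝ))*θ - (z.1*Real.cos θ + z.2*Real.sin θ) : ℝ) : ℂ)) * ((G0 θ : ℝ) : ℂ) := by
    intro θ
    rw [← Complex.exp_add]
    congr 1
    push_cast
    ring
  rw [intervalIntegral.integral_congr (fun θ _ => hcongr θ)]
  exact s9_main n z.1 z.2 R M G0 G1 G2 G3 hd0 hd1 hd2 hcont3 hp0 hp1 hp2
    hM1' hb0 hb1 hb2 hb3 hR hz hn

end S9final
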